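/- Let K be the bounded linear operator on L²((0,1), ℂ) defined by (K f)(x) = ∫_x^1 f(s) ds. Then the operator norm of K equals 2/π. -/

import Mathlib

open MeasureTheory

/-- Lebesgue measure restricted to the interval `(0,1)`. -/
noncomputable def mu01 : Measure ℝ := volume.restrict (Set.Ioo 0 1)

/-- `K` is the Volterra-type operator `(K f)(x) = ∫_x^1 f(s) ds` on `L²((0,1), ℂ)`. -/
def IsIntOp (K : Lp ℂ 2 mu01 →L[ℂ] Lp ℂ 2 mu01) : Prop :=
  ∀ f : Lp ℂ 2 mu01, ∀ᵐ x ∂mu01, (K f : ℝ → ℂ) x = ∫ s in Set.Ioo x 1, f s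

open Real Set
open scoped ENNReal NNReal

theorem intA (x : ℝ) : ∫ s in x..1, Real.sin (π/2 * s) = 2/π * Real.cos (π/2 * x) := by
  rw [intervalIntegral.integral_comp_mul_left (fun t => Real.sin t) (by positivity : (π/2 : ℝ) ≠ 0)]
  simp

theorem intB (s : ℝ) : ∫ x in (0:ℝ)..s, Real.cos (π/2 * x) = 2/π * Real.sin (π/2 * s) := by
  rw [intervalIntegral.integral_comp_mul_left (fun t => Real.cos t) (by positivity : (π/2 : ℝ) ≠ 0)]
  simp

theorem lintA {x : ℝ} (hx : x ∈ Icc (0:ℝ) 1) :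
    ∫⁻ s in Ioo x 1, ENNReal.ofReal (Real.sin (π/2 * s)) =
      ENNReal.ofReal (2/π * Real.cos (π/2 * x)) := by
  rw [← ofReal_integral_eq_lintegral_ofReal]
  · rw [← integral_Ioc_eq_integral_Ioo, ← intervalIntegral.integral_of_le hx.2, intA]
  · exact ((Real.continuous_sin.comp (continuous_const.mul continuous_id)).integrableOn_Ioc).mono_set
      Ioo_subset_Ioc_self
  · refine (ae_restrict_iff' measurableSet_Ioo).2 (Filter.Eventually.of_forall fun s hs => ?_)
    exact Real.sin_nonneg_of_nonneg_of_le_pi (by nlinarith [Real.pi_pos, hx.1, hs.1]) (by nlinarith [Real.pi_pos, hs.2])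

theorem lintB {s : ℝ} (hs : s ∈ Icc (0:ℝ) 1) :
    ∫⁻ x in Ioo 0 s, ENNReal.ofReal (Real.cos (π/2 * x)) =
      ENNReal.ofReal (2/π * Real.sin (π/2 * s)) := by
  rw [← ofReal_integral_eq_lintegral_ofReal]
  · rw [← integral_Ioc_eq_integral_Ioo, ← intervalIntegral.integral_of_le hs.1, intB]
  · exact ((Real.continuous_cos.comp (continuous_const.mul continuous_id)).integrableOn_Ioc).mono_set
      Ioo_subset_Ioc_self
  · refine (ae_restrict_iff' measurableSet_Ioo).2 (Filter.Eventually.of_forall fun x hx => ?_)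
    refine Real.cos_nonneg_of_mem_Icc ⟨by nlinarith [Real.pi_pos, hx.1], by nlinarith [Real.pi_pos, hx.2, hs.2]⟩

theorem intC : ∫ s in (0:ℝ)..1, Real.sin (π/2 * s) ^ 2 = 1/2 := by
  rw [intervalIntegral.integral_comp_mul_left (fun t => Real.sin t ^ 2) (by positivity : (π/2 : ℝ) ≠ 0)]
  simp; field_simp

theorem intD : ∫ s in (0:ℝ)..1, Real.cos (π/2 * s) ^ 2 = 1/2 := by
  rw [intervalIntegral.integral_comp_mul_left (fun t => Real.cos t ^ 2) (by positivity : (π/2 : ℝ) ≠ 0)]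
  simp [integral_cos_sq]; field_simp

theorem schur (f : ℝ → ℂ) (hm : Measurable f) :
    ∫⁻ x in Ioo (0:ℝ) 1, (‖(∫ s in Ioo x 1, f s : ℂ)‖₊ : ℝ≥0∞) ^ 2
      ≤ ENNReal.ofReal ((2/π)^2) * ∫⁻ s in Ioo (0:ℝ) 1, (‖f s‖₊ : ℝ≥0∞) ^ 2 := by
  set P : ℝ → ℝ≥0∞ := fun s => ENNReal.ofReal (Real.sin (π/2 * s)) with hP
  set F : ℝ → ℝ≥0∞ := fun s => (‖f s‖₊ : ℝ≥0∞) with hF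
  set H : ℝ → ℝ≥0∞ := fun s => F s ^ 2 / P s with hH
  set c : ℝ → ℝ≥0∞ := fun x => ENNReal.ofReal (2/π * Real.cos (π/2 * x)) with hc
  have hPm : Measurable P := by
    exact ENNReal.measurable_ofReal.comp (Real.continuous_sin.comp
      (continuous_const.mul continuous_id)).measurable
  have hcm : Measurable c := by
    exact ENNReal.measurable_ofReal.comp ((continuous_const.mul (Real.continuous_cos.comp
      (continuous_const.mul continuous_id)))).measurable
  have hFm : Measurable F := hm.nnnorm.coe_nnreal_ennreal
  have hHm : Measurable H := (hFm.pow_const 2).div hPm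
  have hPpos : ∀ s ∈ Ioo (0:ℝ) 1, P s ≠ 0 ∧ P s ≠ ⊤ := by
    intro s hs
    refine ⟨?_, ENNReal.ofReal_ne_top⟩
    simp only [hP, ne_eq, ENNReal.ofReal_eq_zero, not_le]
    exact Real.sin_pos_of_pos_of_lt_pi (by nlinarith [Real.pi_pos, hs.1])
      (by nlinarith [Real.pi_pos, hs.2])
  -- Step 1: pointwise Cauchy-Schwarz
  have step1 : ∀ x ∈ Ioo (0:ℝ) 1,
      (‖(∫ s in Ioo x 1, f s : ℂ)‖₊ : ℝ≥0∞) ^ 2 ≤ c x * ∫⁻ s in Ioo x 1, H s := by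
    intro x hx
    have h1 : (‖(∫ s in Ioo x 1, f s : ℂ)‖₊ : ℝ≥0∞) ≤ ∫⁻ s in Ioo x 1, F s :=
      enorm_integral_le_lintegral_enorm _
    have h2 : ∫⁻ s in Ioo x 1, F s
        ≤ (∫⁻ s in Ioo x 1, P s) ^ (1/2 : ℝ) * (∫⁻ s in Ioo x 1, H s) ^ (1/2 : ℝ) := by
      have hconj : Real.HolderConjugate 2 2 := Real.HolderConjugate.two_two
      have := ENNReal.lintegral_mul_le_Lp_mul_Lq (volume.restrict (Ioo x 1)) hconj
        ((hPm.pow_const (1/2 : ℝ)).aemeasurable) ((hHm.pow_const (1/2 : ℝ)).aemeasurable)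
      -- rewrite LHS and the rpow-squares
      have hps : ∀ s ∈ Ioo x 1, (fun s => P s ^ (1/2:ℝ)) s * (fun s => H s ^ (1/2:ℝ)) s = F s := by
        intro s hs
        have hs01 : s ∈ Ioo (0:ℝ) 1 := ⟨lt_of_le_of_lt hx.1.le hs.1, hs.2⟩
        obtain ⟨hp0, hpt⟩ := hPpos s hs01
        simp only
        rw [← ENNReal.mul_rpow_of_nonneg _ _ (by norm_num : (0:ℝ) ≤ 1/2),
          ENNReal.mul_div_cancel hp0 hpt]
        rw [← ENNReal.rpow_natCast (F s) 2, ← ENNReal.rpow_mul]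
        norm_num
      calc ∫⁻ s in Ioo x 1, F s
          = ∫⁻ s in Ioo x 1, (fun s => P s ^ (1/2:ℝ)) s * (fun s => H s ^ (1/2:ℝ)) s :=
            (setLIntegral_congr_fun measurableSet_Ioo (
              fun s hs => (hps s hs).symm))
        _ ≤ (∫⁻ s in Ioo x 1, (P s ^ ((1:ℝ)/2)) ^ (2:ℝ)) ^ (1/2 : ℝ)
              * (∫⁻ s in Ioo x 1, (H s ^ ((1:ℝ)/2)) ^ (2:ℝ)) ^ (1/2 : ℝ) := this
        _ = (∫⁻ s in Ioo x 1, P s) ^ (1/2 : ℝ) * (∫⁻ s in Ioo x 1, H s) ^ (1/2 : ℝ) := by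
            congr 2 <;> refine lintegral_congr fun s => ?_ <;>
              rw [← ENNReal.rpow_mul] <;> norm_num
    have h3 : ∫⁻ s in Ioo x 1, P s = c x := lintA ⟨hx.1.le, hx.2.le⟩
    calc (‖(∫ s in Ioo x 1, f s : ℂ)‖₊ : ℝ≥0∞) ^ 2
        ≤ (∫⁻ s in Ioo x 1, F s) ^ 2 := by exact pow_le_pow_left' h1 2
      _ ≤ ((∫⁻ s in Ioo x 1, P s) ^ (1/2 : ℝ) * (∫⁻ s in Ioo x 1, H s) ^ (1/2 : ℝ)) ^ 2 :=
          pow_le_pow_left' h2 2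
      _ = c x * ∫⁻ s in Ioo x 1, H s := by
          rw [mul_pow, ← ENNReal.rpow_natCast (_ ^ (1/2:ℝ)) 2, ← ENNReal.rpow_natCast (_ ^ (1/2:ℝ)) 2,
            ← ENNReal.rpow_mul, ← ENNReal.rpow_mul]
          norm_num [h3]
  -- Step 2: Tonelli swap
  set Φ : ℝ → ℝ → ℝ≥0∞ := fun x s => if x < s then c x * H s else 0 with hΦ
  have hΦm : Measurable (Function.uncurry Φ) := by
    refine Measurable.ite ?_ ((hcm.comp measurable_fst).mul (hHm.comp measurable_snd))
      measurable_const
    exact measurableSet_lt measurable_fst measurable_snd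
  have inner1 : ∀ x ∈ Ioo (0:ℝ) 1, ∫⁻ s in Ioo (0:ℝ) 1, Φ x s = c x * ∫⁻ s in Ioo x 1, H s := by
    intro x hx
    have : ∀ s ∈ Ioo (0:ℝ) 1, Φ x s = (Ioo x 1).indicator (fun s => c x * H s) s := by
      intro s hs
      by_cases h : x < s
      · rw [hΦ]; simp only [if_pos h]
        rw [Set.indicator_of_mem (show s ∈ Ioo x 1 from ⟨h, hs.2⟩)]
      · rw [hΦ]; simp only [if_neg h]
        rw [Set.indicator_of_notMem (fun hmem => h hmem.1)]
    rw [setLIntegral_congr_fun measurableSet_Ioo this,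
      lintegral_indicator measurableSet_Ioo, Measure.restrict_restrict measurableSet_Ioo,
      Set.Ioo_inter_Ioo]
    rw [max_eq_left hx.1.le, min_self]
    exact lintegral_const_mul _ hHm
  have inner2 : ∀ s ∈ Ioo (0:ℝ) 1, ∫⁻ x in Ioo (0:ℝ) 1, Φ x s
      = ENNReal.ofReal ((2/π)^2) * F s ^ 2 := by
    intro s hs
    have : ∀ x ∈ Ioo (0:ℝ) 1, Φ x s = (Ioo (0:ℝ) s).indicator (fun x => c x * H s) x := by
      intro x hx
      by_cases h : x < s
      · rw [hΦ]; simp only [if_pos h]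
        rw [Set.indicator_of_mem (show x ∈ Ioo (0:ℝ) s from ⟨hx.1, h⟩)]
      · rw [hΦ]; simp only [if_neg h]
        rw [Set.indicator_of_notMem (fun hmem => h hmem.2)]
    rw [setLIntegral_congr_fun measurableSet_Ioo this,
      lintegral_indicator measurableSet_Ioo, Measure.restrict_restrict measurableSet_Ioo,
      Set.Ioo_inter_Ioo]
    rw [max_self, min_eq_left hs.2.le]
    rw [lintegral_mul_const _ hcm]
    have hc2 : ∫⁻ x in Ioo (0:ℝ) s, c x = ENNReal.ofReal (2/π) * ENNReal.ofReal (2/π * Real.sin (π/2 * s)) := by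
      have : ∀ x, c x = ENNReal.ofReal (2/π) * ENNReal.ofReal (Real.cos (π/2 * x)) := by
        intro x
        rw [hc]; simp only
        rw [← ENNReal.ofReal_mul (by positivity)]
      simp only [this]
      rw [lintegral_const_mul' _ _ ENNReal.ofReal_ne_top, lintB ⟨hs.1.le, hs.2.le⟩]
    rw [hc2]
    rw [← ENNReal.ofReal_mul (by positivity)]
    have hsin : ENNReal.ofReal (2/π * (2/π * Real.sin (π/2 * s))) =
        ENNReal.ofReal ((2/π)^2) * P s := by
      rw [hP]; simp only
      rw [← ENNReal.ofReal_mul (by positivity)]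
      ring_nf
    rw [hsin, mul_comm (ENNReal.ofReal ((2/π)^2)) (P s), mul_assoc, hH]
    simp only
    obtain ⟨hp0, hpt⟩ := hPpos s hs
    rw [mul_comm (P s) _, mul_assoc, ENNReal.div_mul_cancel hp0 hpt]
  calc ∫⁻ x in Ioo (0:ℝ) 1, (‖(∫ s in Ioo x 1, f s : ℂ)‖₊ : ℝ≥0∞) ^ 2
      ≤ ∫⁻ x in Ioo (0:ℝ) 1, ∫⁻ s in Ioo (0:ℝ) 1, Φ x s := by
        refine setLIntegral_mono' measurableSet_Ioo fun x hx => ?_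
        rw [inner1 x hx]
        exact step1 x hx
    _ = ∫⁻ s in Ioo (0:ℝ) 1, ∫⁻ x in Ioo (0:ℝ) 1, Φ x s :=
        lintegral_lintegral_swap hΦm.aemeasurable
    _ = ∫⁻ s in Ioo (0:ℝ) 1, ENNReal.ofReal ((2/π)^2) * F s ^ 2 :=
        setLIntegral_congr_fun measurableSet_Ioo inner2
    _ = ENNReal.ofReal ((2/π)^2) * ∫⁻ s in Ioo (0:ℝ) 1, F s ^ 2 :=
        lintegral_const_mul _ (hFm.pow_const 2)

instance : IsFiniteMeasure mu01 := by
  constructor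
  rw [mu01, Measure.restrict_apply_univ]
  simp

theorem vbound (f : ℝ → ℂ) (hf : AEStronglyMeasurable f mu01) :
    ∫⁻ x in Ioo (0:ℝ) 1, (‖(∫ s in Ioo x 1, f s : ℂ)‖₊ : ℝ≥0∞) ^ 2
      ≤ ENNReal.ofReal ((2/π)^2) * ∫⁻ s in Ioo (0:ℝ) 1, (‖f s‖₊ : ℝ≥0∞) ^ 2 := by
  obtain ⟨f', hf'm, hff'⟩ := hf
  have hae : f =ᵐ[volume.restrict (Ioo (0:ℝ) 1)] f' := hff'
  have h1 : ∫⁻ x in Ioo (0:ℝ) 1, (‖(∫ s in Ioo x 1, f s : ℂ)‖₊ : ℝ≥0∞) ^ 2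
      = ∫⁻ x in Ioo (0:ℝ) 1, (‖(∫ s in Ioo x 1, f' s : ℂ)‖₊ : ℝ≥0∞) ^ 2 := by
    refine setLIntegral_congr_fun measurableSet_Ioo (fun x hx => ?_)
    have : f =ᵐ[volume.restrict (Ioo x 1)] f' :=
      ae_restrict_of_ae_restrict_of_subset (Ioo_subset_Ioo_left hx.1.le) hae
    rw [integral_congr_ae this]
  have h2 : ∫⁻ s in Ioo (0:ℝ) 1, (‖f s‖₊ : ℝ≥0∞) ^ 2
      = ∫⁻ s in Ioo (0:ℝ) 1, (‖f' s‖₊ : ℝ≥0∞) ^ 2 :=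
    lintegral_congr_ae (hae.mono fun s h => by simp only [h])
  rw [h1, h2]
  exact schur f' hf'm.measurable

theorem eLpNorm_vbound (f : ℝ → ℂ) (hf : AEStronglyMeasurable f mu01) :
    eLpNorm (fun x => ∫ s in Ioo x 1, f s) 2 mu01 ≤ ENNReal.ofReal (2/π) * eLpNorm f 2 mu01 := by
  rw [eLpNorm_eq_lintegral_rpow_enorm_toReal two_ne_zero ENNReal.ofNat_ne_top,
    eLpNorm_eq_lintegral_rpow_enorm_toReal two_ne_zero ENNReal.ofNat_ne_top]
  simp only [enorm_eq_nnnorm]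
  have htr : (2:ℝ≥0∞).toReal = (2:ℝ) := by simp
  rw [htr]
  have hrw : ∀ g : ℝ → ℂ, ∫⁻ x, (‖g x‖₊ : ℝ≥0∞) ^ (2:ℝ) ∂mu01
      = ∫⁻ x in Ioo (0:ℝ) 1, (‖g x‖₊ : ℝ≥0∞) ^ 2 := by
    intro g
    rw [mu01]
    refine lintegral_congr fun x => ?_
    rw [← ENNReal.rpow_natCast (‖g x‖₊ : ℝ≥0∞) 2]
    norm_num
  rw [hrw, hrw]
  have h := vbound f hf
  have h2 := ENNReal.rpow_le_rpow h (by norm_num : (0:ℝ) ≤ 1/2)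
  refine le_trans h2 (le_of_eq ?_)
  rw [ENNReal.mul_rpow_of_nonneg _ _ (by norm_num : (0:ℝ) ≤ 1/2),
    ENNReal.ofReal_rpow_of_pos (by positivity)]
  congr 2
  rw [← Real.rpow_natCast (2/π) 2, ← Real.rpow_mul (by positivity)]
  norm_num

noncomputable def Vop (f : Lp ℂ 2 mu01) : ℝ → ℂ :=
  fun x => ∫ s in x..1, (Set.Ioo (0:ℝ) 1).indicator (⇑f) s

theorem ind_integrable (f : Lp ℂ 2 mu01) :
    Integrable ((Set.Ioo (0:ℝ) 1).indicator (⇑f)) volume := by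
  have h1 : Integrable (⇑f) mu01 := (Lp.memLp f).integrable (by norm_num)
  exact IntegrableOn.integrable_indicator h1 measurableSet_Ioo

theorem Vop_cont (f : Lp ℂ 2 mu01) : Continuous (Vop f) := by
  have h : Continuous fun x => ∫ s in (1:ℝ)..x, (Set.Ioo (0:ℝ) 1).indicator (⇑f) s :=
    intervalIntegral.continuous_primitive
      (fun a b => (ind_integrable f).intervalIntegrable) 1
  have : Vop f = fun x => -∫ s in (1:ℝ)..x, (Set.Ioo (0:ℝ) 1).indicator (⇑f) s := by
    funext x
    rw [Vop, intervalIntegral.integral_symm]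
  rw [this]
  exact h.neg

theorem Vop_eq (f : Lp ℂ 2 mu01) {x : ℝ} (hx : x ∈ Ioo (0:ℝ) 1) :
    Vop f x = ∫ s in Ioo x 1, (f : ℝ → ℂ) s := by
  have hset : Ioc x 1 ∩ Ioo (0:ℝ) 1 = Ioo x 1 := by
    ext s
    simp only [mem_inter_iff, mem_Ioc, mem_Ioo]
    constructor
    · rintro ⟨⟨h1, _⟩, _, h4⟩; exact ⟨h1, h4⟩
    · rintro ⟨h1, h2⟩; exact ⟨⟨h1, h2.le⟩, lt_of_le_of_lt hx.1.le h1, h2⟩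
  rw [Vop, intervalIntegral.integral_of_le hx.2.le, setIntegral_indicator measurableSet_Ioo,
    hset]

theorem Vop_ae (f : Lp ℂ 2 mu01) :
    Vop f =ᵐ[mu01] fun x => ∫ s in Ioo x 1, (f : ℝ → ℂ) s := by
  have : ∀ᵐ x ∂mu01, x ∈ Ioo (0:ℝ) 1 := ae_restrict_mem measurableSet_Ioo
  exact this.mono fun x hx => Vop_eq f hx

theorem Vop_memℒp (f : Lp ℂ 2 mu01) : MemLp (Vop f) 2 mu01 := by
  refine ⟨(Vop_cont f).aestronglyMeasurable, ?_⟩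
  rw [eLpNorm_congr_ae (Vop_ae f)]
  refine lt_of_le_of_lt (eLpNorm_vbound (⇑f) (Lp.aestronglyMeasurable f)) ?_
  exact ENNReal.mul_lt_top ENNReal.ofReal_lt_top (Lp.memLp f).2

theorem Vop_norm (f : Lp ℂ 2 mu01) :
    ‖(Vop_memℒp f).toLp (Vop f)‖ ≤ 2/π * ‖f‖ := by
  rw [Lp.norm_toLp, Lp.norm_def]
  have h1 : eLpNorm (Vop f) 2 mu01 ≤ ENNReal.ofReal (2/π) * eLpNorm (⇑f) 2 mu01 := by
    rw [eLpNorm_congr_ae (Vop_ae f)]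
    exact eLpNorm_vbound (⇑f) (Lp.aestronglyMeasurable f)
  refine le_trans (ENNReal.toReal_mono ?_ h1) (le_of_eq ?_)
  · exact (ENNReal.mul_lt_top ENNReal.ofReal_lt_top (Lp.memLp f).2).ne
  · rw [ENNReal.toReal_mul, ENNReal.toReal_ofReal (by positivity)]

theorem ind_add (f g : Lp ℂ 2 mu01) :
    (Ioo (0:ℝ) 1).indicator ⇑(f + g) =ᵐ[volume]
      (Ioo (0:ℝ) 1).indicator ⇑f + (Ioo (0:ℝ) 1).indicator ⇑g := by
  have h : ⇑(f + g) =ᵐ[mu01] ⇑f + ⇑g := Lp.coeFn_add f g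
  have h2 : ∀ᵐ x ∂volume, x ∈ Ioo (0:ℝ) 1 → (f + g : Lp ℂ 2 mu01) x = f x + g x :=
    (ae_restrict_iff' measurableSet_Ioo).1 h
  refine h2.mono fun x hx => ?_
  by_cases hm : x ∈ Ioo (0:ℝ) 1
  · simp only [Pi.add_apply, Set.indicator_of_mem hm]
    simpa using hx hm
  · simp [Set.indicator_of_notMem hm]

theorem ind_smul (c : ℂ) (f : Lp ℂ 2 mu01) :
    (Ioo (0:ℝ) 1).indicator ⇑(c • f) =ᵐ[volume] c • (Ioo (0:ℝ) 1).indicator ⇑f := by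
  have h : ⇑(c • f) =ᵐ[mu01] c • ⇑f := Lp.coeFn_smul c f
  have h2 : ∀ᵐ x ∂volume, x ∈ Ioo (0:ℝ) 1 → (c • f : Lp ℂ 2 mu01) x = c • f x :=
    (ae_restrict_iff' measurableSet_Ioo).1 h
  refine h2.mono fun x hx => ?_
  by_cases hm : x ∈ Ioo (0:ℝ) 1
  · simp only [Pi.smul_apply, Set.indicator_of_mem hm]
    simpa using hx hm
  · simp [Set.indicator_of_notMem hm]

theorem Vop_add (f g : Lp ℂ 2 mu01) : Vop (f + g) = Vop f + Vop g := by
  funext x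
  have h1 : Vop (f + g) x = ∫ s in x..1, ((Ioo (0:ℝ) 1).indicator ⇑f
      + (Ioo (0:ℝ) 1).indicator ⇑g) s := by
    rw [Vop]
    refine intervalIntegral.integral_congr_ae ?_
    exact (ind_add f g).mono fun s hs _ => hs
  rw [h1]
  simp only [Pi.add_apply]
  rw [intervalIntegral.integral_add ((ind_integrable f).intervalIntegrable)
    ((ind_integrable g).intervalIntegrable)]
  rfl

theorem Vop_smul (c : ℂ) (f : Lp ℂ 2 mu01) : Vop (c • f) = c • Vop f := by
  funext x
  have h1 : Vop (c • f) x = ∫ s in x..1, (c • (Ioo (0:ℝ) 1).indicator ⇑f) s := by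
    rw [Vop]
    refine intervalIntegral.integral_congr_ae ?_
    exact (ind_smul c f).mono fun s hs _ => hs
  rw [h1]
  simp only [Pi.smul_apply]
  rw [intervalIntegral.integral_smul]
  rfl

noncomputable def Kfun : Lp ℂ 2 mu01 →ₗ[ℂ] Lp ℂ 2 mu01 where
  toFun f := (Vop_memℒp f).toLp (Vop f)
  map_add' f g := by
    rw [MemLp.toLp_congr (Vop_memℒp (f + g)) ((Vop_memℒp f).add (Vop_memℒp g))
      (Filter.EventuallyEq.of_eq (Vop_add f g))]
    exact MemLp.toLp_add _ _
  map_smul' c f := by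
    simp only [RingHom.id_apply]
    rw [MemLp.toLp_congr (Vop_memℒp (c • f)) ((Vop_memℒp f).const_smul c)
      (Filter.EventuallyEq.of_eq (Vop_smul c f))]
    exact MemLp.toLp_const_smul c _

noncomputable def K0 : Lp ℂ 2 mu01 →L[ℂ] Lp ℂ 2 mu01 :=
  LinearMap.mkContinuous Kfun (2/π) (fun f => Vop_norm f)

theorem K0_isIntOp : IsIntOp K0 := by
  intro f
  have h0 : K0 f = (Vop_memℒp f).toLp (Vop f) := rfl
  have h1 : ⇑(K0 f) =ᵐ[mu01] Vop f := by
    rw [h0]; exact MemLp.coeFn_toLp _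
  exact h1.trans (Vop_ae f)

theorem norm_le_gen (K : Lp ℂ 2 mu01 →L[ℂ] Lp ℂ 2 mu01) (hK : IsIntOp K)
    (f : Lp ℂ 2 mu01) : ‖K f‖ ≤ 2/π * ‖f‖ := by
  rw [Lp.norm_def, Lp.norm_def, eLpNorm_congr_ae (hK f)]
  have h1 : eLpNorm (fun x => ∫ s in Ioo x 1, (f : ℝ → ℂ) s) 2 mu01
      ≤ ENNReal.ofReal (2/π) * eLpNorm (⇑f) 2 mu01 :=
    eLpNorm_vbound (⇑f) (Lp.aestronglyMeasurable f)
  refine le_trans (ENNReal.toReal_mono ?_ h1) (le_of_eq ?_)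
  · exact (ENNReal.mul_lt_top ENNReal.ofReal_lt_top (Lp.memLp f).2).ne
  · rw [ENNReal.toReal_mul, ENNReal.toReal_ofReal (by positivity)]

theorem elp_ofReal (r : ℝ → ℝ) (hr : Continuous r) (v : ℝ)
    (hv : ∫ x in (0:ℝ)..1, r x ^ 2 = v) :
    eLpNorm (fun x => ((r x : ℝ) : ℂ)) 2 mu01 = ENNReal.ofReal (Real.sqrt v) := by
  have hv0 : 0 ≤ v := by
    rw [← hv]
    exact intervalIntegral.integral_nonneg zero_le_one (fun x _ => sq_nonneg _)
  rw [eLpNorm_eq_lintegral_rpow_enorm_toReal two_ne_zero ENNReal.ofNat_ne_top]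
  simp only [enorm_eq_nnnorm]
  have htr : (2:ℝ≥0∞).toReal = (2:ℝ) := by simp
  rw [htr]
  have h1 : ∀ x : ℝ, (‖((r x : ℝ) : ℂ)‖₊ : ℝ≥0∞) ^ (2:ℝ) = ENNReal.ofReal (r x ^ 2) := by
    intro x
    rw [← enorm_eq_nnnorm, ← ofReal_norm, ENNReal.ofReal_rpow_of_nonneg (norm_nonneg _)
      (by norm_num)]
    congr 1
    rw [Complex.norm_real, Real.norm_eq_abs, show (2:ℝ) = ((2:ℕ):ℝ) by norm_num,
      Real.rpow_natCast, sq_abs]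
  simp only [h1]
  have h2 : ∫⁻ x, ENNReal.ofReal (r x ^ 2) ∂mu01 = ENNReal.ofReal v := by
    rw [mu01, ← ofReal_integral_eq_lintegral_ofReal]
    · rw [← integral_Ioc_eq_integral_Ioo, ← intervalIntegral.integral_of_le zero_le_one, hv]
    · exact ((hr.pow 2).integrableOn_Ioc).mono_set Ioo_subset_Ioc_self
    · exact Filter.Eventually.of_forall fun x => sq_nonneg _
  rw [h2, ENNReal.ofReal_rpow_of_nonneg hv0 (by norm_num), Real.sqrt_eq_rpow]


theorem fsin_cont : Continuous (fun s : ℝ => Real.sin (π/2 * s)) :=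
  Real.continuous_sin.comp (continuous_const.mul continuous_id)

theorem fcos_cont : Continuous (fun x : ℝ => 2/π * Real.cos (π/2 * x)) :=
  continuous_const.mul (Real.continuous_cos.comp (continuous_const.mul continuous_id))

theorem fsin_memℒp : MemLp (fun s : ℝ => ((Real.sin (π/2 * s) : ℝ) : ℂ)) 2 mu01 := by
  refine MemLp.of_bound (Complex.continuous_ofReal.comp fsin_cont).aestronglyMeasurable 1
    (Filter.Eventually.of_forall fun s => ?_)
  rw [Complex.norm_real, Real.norm_eq_abs]
  exact abs_le.2 ⟨Real.neg_one_le_sin _, Real.sin_le_one _⟩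


noncomputable def f0 : Lp ℂ 2 mu01 := fsin_memℒp.toLp _

theorem f0_norm : ‖f0‖ = Real.sqrt (1/2) := by
  rw [f0, Lp.norm_toLp, elp_ofReal _ fsin_cont (1/2) intC,
    ENNReal.toReal_ofReal (Real.sqrt_nonneg _)]

theorem Kf0_ae (K : Lp ℂ 2 mu01 →L[ℂ] Lp ℂ 2 mu01) (hK : IsIntOp K) :
    ⇑(K f0) =ᵐ[mu01] fun x => ((2/π * Real.cos (π/2 * x) : ℝ) : ℂ) := by
  have h1 := hK f0
  have h2 : ⇑f0 =ᵐ[mu01] fun s => ((Real.sin (π/2 * s) : ℝ) : ℂ) := MemLp.coeFn_toLp _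
  have h3 : ∀ᵐ x ∂mu01, x ∈ Ioo (0:ℝ) 1 := ae_restrict_mem measurableSet_Ioo
  refine (h1.and h3).mono fun x hx => ?_
  obtain ⟨hx1, hx2⟩ := hx
  rw [hx1]
  have h4 : (⇑f0) =ᵐ[volume.restrict (Ioo x 1)] fun s => ((Real.sin (π/2 * s) : ℝ) : ℂ) :=
    ae_restrict_of_ae_restrict_of_subset (Ioo_subset_Ioo_left hx2.1.le) h2
  rw [integral_congr_ae h4]
  rw [← integral_Ioc_eq_integral_Ioo, ← intervalIntegral.integral_of_le hx2.2.le,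
    intervalIntegral.integral_ofReal, intA]

theorem Kf0_norm (K : Lp ℂ 2 mu01 →L[ℂ] Lp ℂ 2 mu01) (hK : IsIntOp K) :
    ‖K f0‖ = 2/π * Real.sqrt (1/2) := by
  have hIcos2 : ∫ x in (0:ℝ)..1, (2/π * Real.cos (π/2 * x)) ^ 2 = (2/π)^2 * (1/2) := by
    simp only [mul_pow]
    rw [intervalIntegral.integral_const_mul, intD]
  rw [Lp.norm_def, eLpNorm_congr_ae (Kf0_ae K hK),
    elp_ofReal _ fcos_cont ((2/π)^2 * (1/2)) hIcos2,
    ENNReal.toReal_ofReal (Real.sqrt_nonneg _),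
    Real.sqrt_mul (sq_nonneg _), Real.sqrt_sq (by positivity)]

theorem norm_eq (K : Lp ℂ 2 mu01 →L[ℂ] Lp ℂ 2 mu01) (hK : IsIntOp K) : ‖K‖ = 2/π := by
  refine le_antisymm (K.opNorm_le_bound (by positivity) (norm_le_gen K hK)) ?_
  have h := K.le_opNorm f0
  rw [Kf0_norm K hK, f0_norm] at h
  have hs : 0 < Real.sqrt (1/2) := Real.sqrt_pos.2 (by norm_num)
  exact le_of_mul_le_mul_right h hs


/-- The operator `(K f)(x) = ∫_x^1 f(s) ds` is bounded on `L²((0,1), ℂ)` with norm `2/π`. -/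
theorem statement7 :
    (∃ K : Lp ℂ 2 mu01 →L[ℂ] Lp ℂ 2 mu01, IsIntOp K) ∧
    ∀ K : Lp ℂ 2 mu01 →L[ℂ] Lp ℂ 2 mu01, IsIntOp K → ‖K‖ = 2 / Real.pi := by
  exact ⟨⟨K0, K0_isIntOp⟩, norm_eq⟩
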